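/- For a prime p > 2 and a positive integer t, the ratio fun(p^t)/fun(p) is a power of p, where fun denotes the fundamental period (rank of apparition). -/

import Mathlib

noncomputable def fundPeriod (K : ℕ) : ℕ := sInf {k : ℕ | 0 < k ∧ K ∣ Nat.fib k}

open Matrix Finset

private def Amat : Matrix (Fin 2) (Fin 2) ℤ := !![1, 1; 1, 0]

private lemma Amat_sq : Amat ^ 2 = Amat + 1 := by
  ext i j
  fin_cases i <;> fin_cases j <;>
    simp [Amat, pow_two, Matrix.mul_apply, Fin.sum_univ_two, Matrix.one_apply]

private lemma Amat_pow (n : ℕ) :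
    Amat ^ (n + 1) = (Nat.fib n : ℤ) • (1 : Matrix (Fin 2) (Fin 2) ℤ) + (Nat.fib (n + 1) : ℤ) • Amat := by
  induction n with
  | zero => simp
  | succ n ih =>
    rw [pow_succ, ih, add_mul, smul_mul_assoc, smul_mul_assoc, one_mul, ← pow_two, Amat_sq,
      smul_add, Nat.fib_add_two]
    push_cast
    module

private lemma Amat_pow_entry (n : ℕ) : (Amat ^ n) 0 1 = (Nat.fib n : ℤ) := by
  cases n with
  | zero => simp [Matrix.one_apply]
  | succ n =>
    rw [Amat_pow]
    simp [Amat, Matrix.smul_apply, Matrix.one_apply, ← Matrix.diagonal_natCast,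
      Matrix.diagonal_apply]

/-- Key identity: fib (p*m) as a binomial-type sum, extracted from matrix powers. -/
private lemma fib_mul_eq_sum (p n : ℕ) :
    (Nat.fib (p * (n + 1)) : ℤ) =
      ∑ k ∈ range (p + 1),
        (Nat.fib n : ℤ) ^ k * (Nat.fib (n + 1) : ℤ) ^ (p - k) * (Nat.fib (p - k) : ℤ) * (p.choose k : ℤ) := by
  have hcomm : Commute ((Nat.fib n : ℤ) • (1 : Matrix (Fin 2) (Fin 2) ℤ))
      ((Nat.fib (n + 1) : ℤ) • Amat) := by
    apply Commute.smul_left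
    apply Commute.smul_right
    exact Commute.one_left _
  have h1 : (Amat ^ (n + 1)) ^ p = Amat ^ (p * (n + 1)) := by
    rw [← pow_mul, mul_comm]
  have h2 := hcomm.add_pow p
  rw [← Amat_pow, h1] at h2
  have := congrArg (fun M => M 0 1) h2
  simp only [Amat_pow_entry] at this
  rw [this]
  rw [Matrix.sum_apply]
  apply Finset.sum_congr rfl
  intro k hk
  have : ((Nat.fib n : ℤ) • (1 : Matrix (Fin 2) (Fin 2) ℤ)) ^ k *
      ((Nat.fib (n + 1) : ℤ) • Amat) ^ (p - k) * (p.choose k : Matrix (Fin 2) (Fin 2) ℤ)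
      = ((Nat.fib n : ℤ) ^ k * (Nat.fib (n + 1) : ℤ) ^ (p - k) * (p.choose k : ℤ)) •
        (Amat ^ (p - k)) := by
    have hcast : (p.choose k : Matrix (Fin 2) (Fin 2) ℤ)
        = (p.choose k : ℤ) • (1 : Matrix (Fin 2) (Fin 2) ℤ) := by
      rw [Nat.cast_smul_eq_nsmul, nsmul_eq_mul, mul_one]
    rw [smul_pow, smul_pow, one_pow, smul_mul_smul_comm, one_mul, hcast,
      smul_mul_smul_comm, mul_one]
  rw [this]
  simp only [Matrix.smul_apply, Amat_pow_entry, smul_eq_mul]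
  ring

/-- If p^s divides fib m (s ≥ 1), then p^(s+1) divides fib (p*m). -/
private lemma pow_succ_dvd_fib_mul (p s m : ℕ) (hs : 1 ≤ s) (hm : 0 < m)
    (h : p ^ s ∣ Nat.fib m) : p ^ (s + 1) ∣ Nat.fib (p * m) := by
  obtain ⟨n, rfl⟩ := Nat.exists_eq_add_of_lt hm
  rw [zero_add] at *
  rw [← Int.natCast_dvd_natCast]
  rw [fib_mul_eq_sum p n]
  push_cast
  apply Finset.dvd_sum
  intro k hk
  simp only [Finset.mem_range] at hk
  have hds : (p : ℤ) ^ s ∣ (Nat.fib (n + 1) : ℤ) := by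
    exact_mod_cast Int.natCast_dvd_natCast.mpr h
  rcases Nat.lt_or_ge k (p - 1) with hkp | hkp
  · -- p - k ≥ 2 : term divisible by (fib (n+1))^2, hence p^(2s)
    have h2 : 2 ≤ p - k := by omega
    have : (p : ℤ) ^ (s + 1) ∣ (Nat.fib (n + 1) : ℤ) ^ (p - k) := by
      calc (p : ℤ) ^ (s + 1) ∣ (p : ℤ) ^ (2 * s) := pow_dvd_pow _ (by omega)
        _ = ((p : ℤ) ^ s) ^ 2 := by rw [← pow_mul, mul_comm]
        _ ∣ (Nat.fib (n + 1) : ℤ) ^ 2 := pow_dvd_pow_of_dvd hds 2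
        _ ∣ (Nat.fib (n + 1) : ℤ) ^ (p - k) := pow_dvd_pow _ h2
    exact Dvd.dvd.mul_right (Dvd.dvd.mul_right (this.mul_left _) _) _
  · rcases Nat.lt_or_ge k p with hkp2 | hkp2
    · -- k = p - 1, so p - k = 1, choose p (p-1) = p
      have hk1 : p - k = 1 := by omega
      have hkeq : k = p - 1 := by omega
      have hch : (p.choose k : ℤ) = (p : ℤ) := by
        rw [hkeq, Nat.choose_symm (by omega)]
        simp [Nat.choose_one_right]
      rw [hk1, hch]
      have : (p : ℤ) ^ (s + 1) ∣ (Nat.fib (n + 1) : ℤ) ^ 1 * (p : ℤ) := by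
        rw [pow_one, pow_succ]
        exact mul_dvd_mul hds dvd_rfl
      calc (p:ℤ)^(s+1) ∣ (Nat.fib (n + 1) : ℤ) ^ 1 * (p : ℤ) := this
        _ ∣ (Nat.fib n : ℤ) ^ k * (Nat.fib (n + 1) : ℤ) ^ 1 * (Nat.fib 1 : ℤ) * (p : ℤ) := by
            rw [Nat.fib_one]
            push_cast
            rw [mul_one]
            exact mul_dvd_mul (dvd_mul_left _ _) dvd_rfl
    · -- k = p, so p - k = 0, fib 0 = 0
      have : p - k = 0 := by omega
      rw [this]
      simp
  -- (closed by branches)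

/-- Iterating: if p ∣ fib m then p^(j+1) ∣ fib (m * p^j). -/
private lemma pow_dvd_fib_iter (p m : ℕ) (hp : 0 < p) (hm : 0 < m) (h : p ∣ Nat.fib m) :
    ∀ j, p ^ (j + 1) ∣ Nat.fib (m * p ^ j) := by
  intro j
  induction j with
  | zero => simpa using h
  | succ j ih =>
    have hpos : 0 < m * p ^ j := Nat.mul_pos hm (pow_pos hp j)
    have := pow_succ_dvd_fib_mul p (j + 1) (m * p ^ j) (by omega) hpos ih
    have heq : p * (m * p ^ j) = m * p ^ (j + 1) := by ring
    rwa [heq] at this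

/-- Pigeonhole: for 0 < p there is a positive k with p ∣ fib k. -/
private lemma exists_fib_dvd (p : ℕ) (hp : 1 < p) : ∃ k, 0 < k ∧ p ∣ Nat.fib k := by
  haveI : NeZero p := ⟨by omega⟩
  haveI : Fact (1 < p) := ⟨hp⟩
  let f : ℕ → ZMod p × ZMod p := fun k => ((Nat.fib k : ZMod p), (Nat.fib (k + 1) : ZMod p))
  obtain ⟨a, b, hne, hab⟩ := Finite.exists_ne_map_eq_of_infinite f
  -- wlog a < b
  wlog hlt : a < b generalizing a b
  · exact this b a hne.symm hab.symm (by omega)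
  -- descent function
  let back : ZMod p × ZMod p → ZMod p × ZMod p := fun x => (x.2 - x.1, x.1)
  have hstep : ∀ k, f k = back (f (k + 1)) := by
    intro k
    have h2 : Nat.fib (k + 2) = Nat.fib k + Nat.fib (k + 1) := Nat.fib_add_two
    simp only [f, back]
    rw [Prod.mk.injEq]
    refine ⟨?_, rfl⟩
    push_cast [h2]
    ring
  have hiter : ∀ i u, f u = back^[i] (f (u + i)) := by
    intro i
    induction i with
    | zero => simp
    | succ i ih =>
      intro u
      rw [hstep u, ih (u + 1)]
      have : u + 1 + i = u + (i + 1) := by omega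
      rw [this, Function.iterate_succ']
      rfl
  obtain ⟨c, rfl⟩ : ∃ c, b = a + c := ⟨b - a, by omega⟩
  have hc : 0 < c := by omega
  have h0 : f 0 = f c := by
    have h1 : f 0 = back^[a] (f (0 + a)) := hiter a 0
    have h2 : f c = back^[a] (f (c + a)) := hiter a c
    rw [h1, h2, zero_add]
    congr 1
    rw [hab]
    congr 1
    omega
  have : (Nat.fib c : ZMod p) = 0 := by
    have := congrArg Prod.fst h0
    simpa [f] using this.symm
  exact ⟨c, hc, (ZMod.natCast_eq_zero_iff _ _).mp this⟩

/-- The fundamental period divides any index n > 0 with K ∣ fib n. -/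
private lemma fundPeriod_dvd (K n : ℕ) (hn : 0 < n) (h : K ∣ Nat.fib n) :
    fundPeriod K ∣ n := by
  have hne : {k : ℕ | 0 < k ∧ K ∣ Nat.fib k}.Nonempty := ⟨n, hn, h⟩
  have hmem := Nat.sInf_mem hne
  set d := fundPeriod K with hd
  obtain ⟨hdpos, hdvd⟩ : 0 < d ∧ K ∣ Nat.fib d := hmem
  set g := Nat.gcd d n with hg
  have hgfib : K ∣ Nat.fib g := by
    rw [hg, Nat.fib_gcd]
    exact Nat.dvd_gcd hdvd h
  have hgpos : 0 < g := Nat.gcd_pos_of_pos_left n hdpos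
  have hgmem : g ∈ {k : ℕ | 0 < k ∧ K ∣ Nat.fib k} := ⟨hgpos, hgfib⟩
  have hdg : d ≤ g := Nat.sInf_le hgmem
  have hgd : g ∣ d := Nat.gcd_dvd_left d n
  have : g = d := Nat.le_antisymm (Nat.le_of_dvd hdpos hgd) hdg
  rw [← this]
  exact Nat.gcd_dvd_right d n

private lemma fundPeriod_mem (K n : ℕ) (hn : 0 < n) (h : K ∣ Nat.fib n) :
    0 < fundPeriod K ∧ K ∣ Nat.fib (fundPeriod K) :=
  Nat.sInf_mem (⟨n, hn, h⟩ : {k : ℕ | 0 < k ∧ K ∣ Nat.fib k}.Nonempty)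

theorem fundPeriod_prime_pow_ratio (p : ℕ) (hp : p.Prime) (hp2 : 2 < p) (t : ℕ) (ht : 0 < t) :
    ∃ j : ℕ, fundPeriod (p ^ t) = fundPeriod p * p ^ j := by
  obtain ⟨k, hk, hkd⟩ := exists_fib_dvd p hp.one_lt
  obtain ⟨hdpos, hddvd⟩ := fundPeriod_mem p k hk hkd
  set d := fundPeriod p with hd
  -- p^t divides fib (d * p^(t-1))
  have hbig : p ^ t ∣ Nat.fib (d * p ^ (t - 1)) := by
    have := pow_dvd_fib_iter p d hp.pos hdpos hddvd (t - 1)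
    have ht1 : t - 1 + 1 = t := by omega
    rwa [ht1] at this
  have hbigpos : 0 < d * p ^ (t - 1) := Nat.mul_pos hdpos (pow_pos hp.pos _)
  obtain ⟨hDpos, hDdvd⟩ := fundPeriod_mem (p ^ t) _ hbigpos hbig
  set D := fundPeriod (p ^ t) with hD
  -- D divides d * p^(t-1)
  have hDdvd' : D ∣ d * p ^ (t - 1) := fundPeriod_dvd (p ^ t) _ hbigpos hbig
  -- d divides D
  have hpD : p ∣ Nat.fib D := dvd_trans (dvd_pow_self p (by omega)) hDdvd
  have hdD : d ∣ D := fundPeriod_dvd p D hDpos hpD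
  obtain ⟨q, hq⟩ := hdD
  have hqdvd : q ∣ p ^ (t - 1) := by
    have : d * q ∣ d * p ^ (t - 1) := hq ▸ hDdvd'
    exact (mul_dvd_mul_iff_left (by omega : d ≠ 0)).mp this
  obtain ⟨j, _, hjq⟩ := (Nat.dvd_prime_pow hp).mp hqdvd
  exact ⟨j, by rw [hq, hjq]⟩
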